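/- For every k ≥ 1 and 0 ≤ e ≤ k-1, the quantities q(k,e) = 2^{C(k-e,2) - C(k,2)} d(k-1,e) ∏_{j=1}^{⌊(k-e)/2⌋}(1 - (1/2)^{2j-1}), with d(m,e) = ∏_{i=0}^{e-1}(2^m - 2^i)/(2^e - 2^i), satisfy Σ_{e=0}^{k-1} q(k,e) = 1. -/

import Mathlib

open Finset
noncomputable def D (n e : ℕ) : ℝ := ∏ i ∈ Finset.range e, ((2:ℝ)^n - 2^i) / ((2:ℝ)^e - 2^i)
noncomputable def Pp (m : ℕ) : ℝ := ∏ j ∈ Finset.Icc 1 m, (1 - (1/2:ℝ)^(2*j-1))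
noncomputable def Q (K E : ℕ) : ℝ :=
  (2:ℝ) ^ ((((K - E).choose 2 : ℤ)) - ((K.choose 2 : ℤ))) *
    (∏ i ∈ Finset.range E, (((2:ℝ) ^ (K - 1) - 2 ^ i) / ((2:ℝ) ^ E - 2 ^ i))) *
    ∏ j ∈ Finset.Icc 1 ((K - E) / 2), (1 - (1/2 : ℝ) ^ (2 * j - 1))
lemma Q_eq (K E : ℕ) : Q K E = (2:ℝ) ^ ((((K - E).choose 2 : ℤ)) - ((K.choose 2 : ℤ))) * D (K-1) E * Pp ((K-E)/2) := rfl
lemma pow_lt (i e : ℕ) (h : i < e) : (2:ℝ)^i < 2^e := pow_lt_pow_right₀ (by norm_num) h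
lemma pow_sub_one_ne (t : ℕ) (h : 1 ≤ t) : (2:ℝ)^t - 1 ≠ 0 := by
  have := pow_lt 0 t h; simp at this; linarith
lemma den_ne (e : ℕ) : ∏ i ∈ Finset.range e, ((2:ℝ)^e - 2^i) ≠ 0 := by
  apply Finset.prod_ne_zero_iff.2
  intro i hi
  have := pow_lt i e (Finset.mem_range.1 hi)
  linarith
lemma choose2_succ (a : ℕ) : (a+1).choose 2 = a.choose 2 + a := by
  rw [Nat.choose_succ_succ, Nat.choose_one_right, Nat.add_comm]
lemma hc (a b : ℕ) : (2:ℝ)^((a:ℤ) - (b:ℤ)) = 2^a / 2^b := by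
  rw [zpow_sub₀ (two_ne_zero), zpow_natCast, zpow_natCast]
lemma Pp_succ (m : ℕ) : Pp (m+1) = Pp m * (1 - (1/2:ℝ)^(2*m+1)) := by
  unfold Pp
  rw [Finset.prod_Icc_succ_top (by omega), show 2*(m+1)-1 = 2*m+1 from by omega]

lemma D_succ (n e : ℕ) : D n (e+1) * (((2:ℝ)^(e+1) - 1) * 2^e) = D n e * ((2:ℝ)^n - 2^e) := by
  unfold D
  rw [Finset.prod_div_distrib, Finset.prod_div_distrib, Finset.prod_range_succ]
  have hden : ∏ i ∈ Finset.range (e+1), ((2:ℝ)^(e+1) - 2^i)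
      = ((2:ℝ)^(e+1) - 1) * (2^e * ∏ i ∈ Finset.range e, ((2:ℝ)^e - 2^i)) := by
    rw [Finset.prod_range_succ']
    have h1 : ∀ i ∈ Finset.range e, ((2:ℝ)^(e+1) - 2^(i+1)) = 2 * ((2:ℝ)^e - 2^i) := by
      intro i _
      rw [pow_succ, pow_succ]; ring
    rw [Finset.prod_congr rfl h1, Finset.prod_mul_distrib, Finset.prod_const, Finset.card_range]
    simp; ring
  rw [hden]
  have h2 := den_ne e
  have h3 : ((2:ℝ)^(e+1) - 1) ≠ 0 := pow_sub_one_ne _ (by omega)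
  have h4 : (2:ℝ)^e ≠ 0 := by positivity
  field_simp

lemma D_up (e : ℕ) : ∀ t : ℕ, D (e+t+1) e * ((2:ℝ)^(t+1) - 1) = D (e+t) e * ((2:ℝ)^(e+t+1) - 1) := by
  induction e with
  | zero => intro t; simp [D]
  | succ e IH =>
    intro t
    have h1 := D_succ (e+t+2) e
    have h2 := D_succ (e+t+1) e
    have hIH := IH (t+1)
    rw [show e+(t+1)+1 = e+t+2 from by omega] at hIH
    rw [show e+(t+1) = e+t+1 from by omega] at hIH
    rw [show e+1+t+1 = e+t+2 from by omega, show e+1+t = e+t+1 from by omega]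
    have hcc : ((2:ℝ)^(e+1) - 1) * 2^e ≠ 0 := by
      have := pow_lt 0 (e+1) (by omega)
      have h4 : (0:ℝ) < 2^e := by positivity
      simp at this
      nlinarith
    apply mul_right_cancel₀ hcc
    linear_combination ((2:ℝ)^(t+1)-1) * h1 - ((2:ℝ)^(e+t+2)-1) * h2
      + ((2:ℝ)^(e+t+1)-2^e) * hIH

lemma recS_even (e m : ℕ) :
    Q (e+2*m+3) (e+1) = (1/2:ℝ)^(e+1) * Q (e+2*m+2) e + (1/2:ℝ)^(e+2) * Q (e+2*m+2) (e+1)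
      + (1 - (1/2:ℝ)^(e+2)) * Q (e+2*m+2) (e+2) := by
  have hD3 := D_up (e+1) (2*m)
  rw [show e+1+2*m+1 = e+2*m+2 from by omega] at hD3
  rw [show e+1+2*m = e+2*m+1 from by omega] at hD3
  have hD1 := D_succ (e+2*m+1) e
  have hD2 := D_succ (e+2*m+1) (e+1)
  have hP := Pp_succ m
  have n1 : ((2:ℝ)^(2*m+1) - 1) ≠ 0 := pow_sub_one_ne _ (by omega)
  have n2 : ((2:ℝ)^(e+1) - 1) ≠ 0 := pow_sub_one_ne _ (by omega)
  have n3 : ((2:ℝ)^(e+2) - 1) ≠ 0 := pow_sub_one_ne _ (by omega)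
  have n4 : (2:ℝ)^e ≠ 0 := by positivity
  have n5 : (2:ℝ)^(e+1) ≠ 0 := by positivity
  have n6 : (2:ℝ)^((e+2*m+2).choose 2) ≠ 0 := by positivity
  have n7 : (2:ℝ)^((2*m).choose 2) ≠ 0 := by positivity
  have e3 : D (e+2*m+2) (e+1) = D (e+2*m+1) (e+1) * ((2:ℝ)^(e+2*m+2)-1) / ((2:ℝ)^(2*m+1)-1) :=
    (eq_div_iff n1).2 hD3
  have e2 : D (e+2*m+1) (e+2) = D (e+2*m+1) (e+1) * ((2:ℝ)^(e+2*m+1)-2^(e+1)) / (((2:ℝ)^(e+2)-1) * 2^(e+1)) :=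
    (eq_div_iff (by exact mul_ne_zero n3 n5)).2 hD2
  have e1 : D (e+2*m+1) (e+1) = D (e+2*m+1) e * ((2:ℝ)^(e+2*m+1)-2^e) / (((2:ℝ)^(e+1)-1) * 2^e) :=
    (eq_div_iff (by exact mul_ne_zero n2 n4)).2 hD1
  rw [Q_eq, Q_eq, Q_eq, Q_eq]
  rw [show e+2*m+3 - (e+1) = 2*m+2 from by omega, show e+2*m+3-1 = e+2*m+2 from by omega,
      show e+2*m+2 - e = 2*m+2 from by omega, show e+2*m+2-1 = e+2*m+1 from by omega,
      show e+2*m+2-(e+1) = 2*m+1 from by omega, show e+2*m+2-(e+2) = 2*m from by omega,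
      show (2*m+2)/2 = m+1 from by omega, show (2*m+1)/2 = m from by omega,
      show (2*m)/2 = m from by omega]
  rw [show (e+2*m+3).choose 2 = (e+2*m+2).choose 2 + (e+2*m+2) from by
        rw [show e+2*m+3 = (e+2*m+2)+1 from by omega, choose2_succ],
      show (2*m+2).choose 2 = (2*m).choose 2 + (4*m+1) from by
        rw [show 2*m+2 = (2*m+1)+1 from by omega, choose2_succ,
            show 2*m+1 = (2*m)+1 from by omega, choose2_succ]; omega,
      show (2*m+1).choose 2 = (2*m).choose 2 + (2*m) from by
        rw [show 2*m+1 = (2*m)+1 from by omega, choose2_succ]]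
  simp only [hc]
  rw [e3, e2, e1, hP]
  simp only [one_div, inv_pow]
  field_simp
  ring

lemma recS_odd (e m : ℕ) :
    Q (e+2*m+4) (e+1) = (1/2:ℝ)^(e+1) * Q (e+2*m+3) e + (1/2:ℝ)^(e+2) * Q (e+2*m+3) (e+1)
      + (1 - (1/2:ℝ)^(e+2)) * Q (e+2*m+3) (e+2) := by
  have hD3 := D_up (e+1) (2*m+1)
  rw [show e+1+(2*m+1)+1 = e+2*m+3 from by omega] at hD3
  rw [show e+1+(2*m+1) = e+2*m+2 from by omega] at hD3
  have hD1 := D_succ (e+2*m+2) e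
  have hD2 := D_succ (e+2*m+2) (e+1)
  have hP := Pp_succ m
  have n1 : ((2:ℝ)^(2*m+1+1) - 1) ≠ 0 := pow_sub_one_ne _ (by omega)
  have n2 : ((2:ℝ)^(e+1) - 1) ≠ 0 := pow_sub_one_ne _ (by omega)
  have n3 : ((2:ℝ)^(e+2) - 1) ≠ 0 := pow_sub_one_ne _ (by omega)
  have n4 : (2:ℝ)^e ≠ 0 := by positivity
  have n5 : (2:ℝ)^(e+1) ≠ 0 := by positivity
  have n6 : (2:ℝ)^((e+2*m+3).choose 2) ≠ 0 := by positivity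
  have n7 : (2:ℝ)^((2*m+1).choose 2) ≠ 0 := by positivity
  have e3 : D (e+2*m+3) (e+1) = D (e+2*m+2) (e+1) * ((2:ℝ)^(e+2*m+3)-1) / ((2:ℝ)^(2*m+1+1)-1) :=
    (eq_div_iff n1).2 hD3
  have e2 : D (e+2*m+2) (e+2) = D (e+2*m+2) (e+1) * ((2:ℝ)^(e+2*m+2)-2^(e+1)) / (((2:ℝ)^(e+2)-1) * 2^(e+1)) :=
    (eq_div_iff (by exact mul_ne_zero n3 n5)).2 hD2
  have e1 : D (e+2*m+2) (e+1) = D (e+2*m+2) e * ((2:ℝ)^(e+2*m+2)-2^e) / (((2:ℝ)^(e+1)-1) * 2^e) :=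
    (eq_div_iff (by exact mul_ne_zero n2 n4)).2 hD1
  rw [Q_eq, Q_eq, Q_eq, Q_eq]
  rw [show e+2*m+4 - (e+1) = 2*m+3 from by omega, show e+2*m+4-1 = e+2*m+3 from by omega,
      show e+2*m+3 - e = 2*m+3 from by omega, show e+2*m+3-1 = e+2*m+2 from by omega,
      show e+2*m+3-(e+1) = 2*m+2 from by omega, show e+2*m+3-(e+2) = 2*m+1 from by omega,
      show (2*m+3)/2 = m+1 from by omega, show (2*m+2)/2 = m+1 from by omega,
      show (2*m+1)/2 = m from by omega]
  rw [show (e+2*m+4).choose 2 = (e+2*m+3).choose 2 + (e+2*m+3) from by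
        rw [show e+2*m+4 = (e+2*m+3)+1 from by omega, choose2_succ],
      show (2*m+3).choose 2 = (2*m+1).choose 2 + (4*m+3) from by
        rw [show 2*m+3 = (2*m+2)+1 from by omega, choose2_succ,
            show 2*m+2 = (2*m+1)+1 from by omega, choose2_succ]; omega,
      show (2*m+2).choose 2 = (2*m+1).choose 2 + (2*m+1) from by
        rw [show 2*m+2 = (2*m+1)+1 from by omega, choose2_succ]]
  simp only [hc]
  rw [e3, e2, e1, hP]
  simp only [one_div, inv_pow]
  field_simp
  ring

lemma D_self (n : ℕ) : D n n = 1 := by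
  unfold D
  apply Finset.prod_eq_one
  intro i hi
  have := pow_lt i n (Finset.mem_range.1 hi)
  exact div_self (by linarith)

lemma Q_eq_zero (K E : ℕ) (h1 : 1 ≤ K) (h2 : K ≤ E) : Q K E = 0 := by
  rw [Q_eq]
  have hz : D (K-1) E = 0 := by
    unfold D
    apply Finset.prod_eq_zero (Finset.mem_range.2 (show K-1 < E by omega))
    have h : (2:ℝ)^(K-1) - 2^(K-1) = 0 := by ring
    rw [h, zero_div]
  rw [hz]; ring

lemma rec_top (e : ℕ) :
    Q (e+2) (e+1) = (1/2:ℝ)^(e+1) * Q (e+1) e + (1/2:ℝ)^(e+2) * Q (e+1) (e+1)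
      + (1 - (1/2:ℝ)^(e+2)) * Q (e+1) (e+2) := by
  rw [Q_eq_zero (e+1) (e+1) (by omega) le_rfl, Q_eq_zero (e+1) (e+2) (by omega) (by omega)]
  rw [Q_eq, Q_eq]
  rw [show e+2-(e+1) = 1 from by omega, show e+2-1 = e+1 from by omega,
      show e+1-e = 1 from by omega, show e+1-1 = e from by omega]
  norm_num [D_self]
  rw [show (e+2).choose 2 = (e+1).choose 2 + (e+1) from by
        rw [show e+2 = (e+1)+1 from by omega, choose2_succ]]
  rw [pow_add, mul_inv]
  simp only [one_div, inv_pow]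
  ring

lemma zpow_shift (c t : ℕ) : (2:ℝ)^((c:ℤ) - ((c+t : ℕ):ℤ)) = 1/2^t := by
  have h : ((c:ℤ) - ((c+t:ℕ):ℤ)) = -(t:ℤ) := by push_cast; ring
  rw [h, zpow_neg, zpow_natCast, one_div]

lemma D_one (n : ℕ) : D n 1 = (2:ℝ)^n - 1 := by
  simp [D]
  norm_num

lemma rec0_odd (m : ℕ) : Q (2*m+2) 0 = 1/2 * Q (2*m+1) 0 + 1/2 * Q (2*m+1) 1 := by
  rw [Q_eq, Q_eq, Q_eq]
  simp only [Nat.sub_zero, sub_self, zpow_zero]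
  rw [show (2*m+2)/2 = m+1 from by omega, show (2*m+1)/2 = m from by omega,
      show 2*m+1-1 = 2*m from by omega, show (2*m)/2 = m from by omega,
      show (2*m+1).choose 2 = (2*m).choose 2 + 2*m from by
        rw [show 2*m+1 = (2*m)+1 from by omega, choose2_succ],
      zpow_shift, D_one]
  simp [D]
  rw [Pp_succ m]
  simp only [one_div, inv_pow]
  have : (2:ℝ)^(2*m) ≠ 0 := by positivity
  field_simp
  ring

lemma rec0_even (m : ℕ) : Q (2*m+3) 0 = 1/2 * Q (2*m+2) 0 + 1/2 * Q (2*m+2) 1 := by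
  rw [Q_eq, Q_eq, Q_eq]
  simp only [Nat.sub_zero, sub_self, zpow_zero]
  rw [show (2*m+3)/2 = m+1 from by omega, show (2*m+2)/2 = m+1 from by omega,
      show 2*m+2-1 = 2*m+1 from by omega, show (2*m+1)/2 = m from by omega,
      show (2*m+2).choose 2 = (2*m+1).choose 2 + (2*m+1) from by
        rw [show 2*m+2 = (2*m+1)+1 from by omega, choose2_succ],
      zpow_shift, D_one]
  simp [D]
  rw [Pp_succ m]
  simp only [one_div, inv_pow]
  have : (2:ℝ)^(2*m+1) ≠ 0 := by positivity
  field_simp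
  ring

lemma sum_shift1 (f : ℕ → ℝ) (k : ℕ) (hf : f k = 0) :
    ∑ e ∈ Finset.range k, f (e+1) = ∑ e ∈ Finset.range k, f e - f 0 := by
  have h := Finset.sum_range_succ' f k
  have h2 := Finset.sum_range_succ f k
  rw [h2, hf, add_zero] at h
  linarith

lemma sum_shift2 (f : ℕ → ℝ) (k : ℕ) (h1 : f k = 0) (h2 : f (k+1) = 0) :
    ∑ e ∈ Finset.range k, f (e+2) = ∑ e ∈ Finset.range k, f e - f 0 - f 1 := by
  have a := sum_shift1 f k h1
  have b := sum_shift1 (fun t => f (t+1)) k h2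
  calc ∑ e ∈ Finset.range k, f (e+2) = ∑ e ∈ Finset.range k, f (e+1+1) :=
        Finset.sum_congr rfl (fun e _ => rfl)
    _ = ∑ e ∈ Finset.range k, f (e+1) - f 1 := b
    _ = ∑ e ∈ Finset.range k, f e - f 0 - f 1 := by rw [a]

theorem Q_sum (k : ℕ) (hk : 1 ≤ k) : ∑ e ∈ Finset.range k, Q k e = 1 := by
  induction k, hk using Nat.le_induction with
  | base =>
    rw [Finset.sum_range_one]
    simp [Q]
  | succ k hk IH =>
    have hQkk : Q k k = 0 := Q_eq_zero k k hk le_rfl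
    have hQk1 : Q k (k+1) = 0 := Q_eq_zero k (k+1) hk (by omega)
    have hrec : ∀ e, e < k → Q (k+1) (e+1) = (1/2:ℝ)^(e+1) * Q k e + (1/2:ℝ)^(e+2) * Q k (e+1)
        + (1-(1/2:ℝ)^(e+2)) * Q k (e+2) := by
      intro e he
      rcases Nat.lt_or_ge e (k-1) with h | h
      · obtain ⟨u, hu⟩ : ∃ u, k = e+2+u := ⟨k-(e+2), by omega⟩
        rcases Nat.even_or_odd u with ⟨v, hv⟩ | ⟨v, hv⟩
        · have := recS_even e v
          rw [show e+2*v+3 = k+1 from by omega, show e+2*v+2 = k from by omega] at this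
          exact this
        · have := recS_odd e v
          rw [show e+2*v+4 = k+1 from by omega, show e+2*v+3 = k from by omega] at this
          exact this
      · obtain rfl : k = e+1 := by omega
        exact rec_top e
    have h0 : Q (k+1) 0 = 1/2 * Q k 0 + 1/2 * Q k 1 := by
      rcases Nat.even_or_odd k with ⟨v, hv⟩ | ⟨v, hv⟩
      · have := rec0_even (v-1)
        rw [show 2*(v-1)+3 = k+1 from by omega, show 2*(v-1)+2 = k from by omega] at this
        exact this
      · have := rec0_odd v
        rw [show 2*v+2 = k+1 from by omega, show 2*v+1 = k from by omega] at this
        exact this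
    rw [Finset.sum_range_succ']
    rw [Finset.sum_congr rfl (fun e he => hrec e (Finset.mem_range.1 he)), h0]
    rw [Finset.sum_add_distrib, Finset.sum_add_distrib]
    have e2 : (∑ e ∈ Finset.range k, (1/2:ℝ)^(e+2) * Q k (e+1))
        = (∑ e ∈ Finset.range k, (1/2:ℝ)^(e+1) * Q k e) - 1/2 * Q k 0 := by
      have h := sum_shift1 (fun t => (1/2:ℝ)^(t+1) * Q k t) k (by simp [hQkk])
      calc (∑ e ∈ Finset.range k, (1/2:ℝ)^(e+2) * Q k (e+1))
          = ∑ e ∈ Finset.range k, (1/2:ℝ)^(e+1+1) * Q k (e+1) :=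
            Finset.sum_congr rfl (fun e _ => rfl)
        _ = _ := by rw [h]; norm_num
    have e3 : (∑ e ∈ Finset.range k, (1-(1/2:ℝ)^(e+2)) * Q k (e+2))
        = (∑ e ∈ Finset.range k, (1-(1/2:ℝ)^e) * Q k e) - 1/2 * Q k 1 := by
      have h := sum_shift2 (fun t => (1-(1/2:ℝ)^t) * Q k t) k (by simp [hQkk]) (by simp [hQk1])
      rw [h]
      norm_num
    rw [e2, e3]
    have merge : (∑ e ∈ Finset.range k, (1/2:ℝ)^(e+1) * Q k e)
        + ((∑ e ∈ Finset.range k, (1/2:ℝ)^(e+1) * Q k e)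
        + (∑ e ∈ Finset.range k, (1-(1/2:ℝ)^e) * Q k e)) = ∑ e ∈ Finset.range k, Q k e := by
      rw [← Finset.sum_add_distrib, ← Finset.sum_add_distrib]
      refine Finset.sum_congr rfl (fun e _ => ?_)
      ring
    rw [IH] at merge
    linarith


/-- The probabilities q(k,e), 0 ≤ e ≤ k-1, that a random undirected graph
on k vertices has exactly 2^{e+1} even partitions, sum to 1. -/
theorem q_sums_to_one (k : ℕ) (hk : 1 ≤ k) (q : ℕ → ℕ → ℝ)
    (hq : ∀ K E, q K E = (2:ℝ) ^ ((((K - E).choose 2 : ℤ)) - ((K.choose 2 : ℤ))) *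
      (∏ i ∈ Finset.range E, (((2:ℝ) ^ (K - 1) - 2 ^ i) / ((2:ℝ) ^ E - 2 ^ i))) *
      ∏ j ∈ Finset.Icc 1 ((K - E) / 2), (1 - (1/2 : ℝ) ^ (2 * j - 1))) :
    ∑ e ∈ Finset.range k, q k e = 1 := by
  have hQ : ∀ e, q k e = Q k e := fun e => hq k e
  rw [Finset.sum_congr rfl (fun e _ => hQ e)]
  exact Q_sum k hk
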